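/- The extended target density $\pi^N(\theta, x_{1:T}, \mathbf{s}_1,\dots,\mathbf{s}_T) = p(\theta, x_{1:T} \mid y_{1:T}) \left\{\prod_{n=2}^T \mathbb{I}[x_{1:n} \in \mathbf{s}_n]\right\} \frac{\psi_\theta^N(\mathbf{s}_1,\dots,\mathbf{s}_T)}{\prod_{n=2}^T r_n^N(x_{1:n} \in \mathbf{s}_n \mid \mathbf{w}_{n-1}^\theta)}$ admits $p(\theta, x_{1:T} \mid y_{1:T})$ as its marginal: summing $\pi^N$ over all support sets $\mathbf{s}_1,\dots,\mathbf{s}_T$ yields $p(\theta, x_{1:T} \mid y_{1:T})$. -/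
import Mathlib


open Finset

universe u

lemma dpf_telescope : ∀ (T : ℕ) (β : Fin T → Type u) [∀ n, Fintype (β n)]
    [∀ n, Nonempty (β n)] [∀ n, DecidableEq (β n)]
    (F : (n : Fin T) → ((m : Fin T) → β m) → ℝ)
    (_hdep : ∀ n s s', (∀ m, m ≤ n → s m = s' m) → F n s = F n s')
    (_hsum : ∀ n s, ∑ t : β n, F n (Function.update s n t) = 1),
    ∑ s : (m : Fin T) → β m, ∏ n, F n s = 1 := by
  intro T
  induction T with
  | zero =>
    intro β _ _ _ F hdep hsum
    simp [Finset.univ_eq_empty (α := Fin 0)]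
  | succ T ih =>
    intro β _ _ _ F hdep hsum
    obtain ⟨t₀⟩ : Nonempty (β (Fin.last T)) := inferInstance
    rw [← Equiv.sum_comp (Fin.snocEquiv β)]
    rw [Fintype.sum_prod_type]
    have key : ∀ (s' : (i : Fin T) → β i.castSucc),
        ∑ t : β (Fin.last T), ∏ n, F n (Fin.snocEquiv β (t, s'))
          = ∏ i : Fin T, F i.castSucc (Fin.snoc s' t₀) := by
      intro s'
      have hval : ∀ t, Fin.snocEquiv β (t, s') = Fin.snoc s' t := fun _ => rfl
      have hsplit : ∀ t : β (Fin.last T),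
          ∏ n, F n (Fin.snoc s' t)
            = (∏ i : Fin T, F i.castSucc (Fin.snoc s' t₀)) *
              F (Fin.last T) (Fin.snoc s' t) := by
        intro t
        rw [Fin.prod_univ_castSucc]
        congr 1
        refine Finset.prod_congr rfl fun i _ => ?_
        refine hdep _ _ _ fun m hm => ?_
        have hm' : m ≠ Fin.last T := by
          intro h; subst h
          exact absurd (hm.trans_lt i.castSucc_lt_last) (lt_irrefl _)
        obtain ⟨j, rfl⟩ := Fin.exists_castSucc_eq.mpr hm'
        simp [Fin.snoc_castSucc]
      simp_rw [hval, hsplit]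
      rw [← Finset.mul_sum]
      have : ∑ t : β (Fin.last T), F (Fin.last T) (Fin.snoc s' t) = 1 := by
        have := hsum (Fin.last T) (Fin.snoc s' t₀)
        simpa [Fin.update_snoc_last] using this
      rw [this, mul_one]
    calc ∑ t : β (Fin.last T), ∑ s', ∏ n, F n (Fin.snocEquiv β (t, s'))
        = ∑ s' : (i : Fin T) → β i.castSucc,
            ∑ t : β (Fin.last T), ∏ n, F n (Fin.snocEquiv β (t, s')) := by
          rw [Finset.sum_comm]
      _ = ∑ s' : (i : Fin T) → β i.castSucc,
            ∏ i : Fin T, F i.castSucc (Fin.snoc s' t₀) := by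
          exact Finset.sum_congr rfl fun s' _ => key s'
      _ = 1 := by
          refine ih (fun i => β i.castSucc)
            (fun n s' => F n.castSucc (Fin.snoc s' t₀)) ?_ ?_
          · intro n s s' h
            refine hdep _ _ _ fun m hm => ?_
            have hm' : m ≠ Fin.last T := by
              intro he; subst he
              exact absurd (hm.trans_lt n.castSucc_lt_last) (lt_irrefl _)
            obtain ⟨j, rfl⟩ := Fin.exists_castSucc_eq.mpr hm'
            simp only [Fin.snoc_castSucc]
            exact h j (by exact_mod_cast Fin.castSucc_le_castSucc_iff.mp hm)
          · intro n s
            have := hsum n.castSucc (Fin.snoc s t₀)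
            simp_rw [← Fin.snoc_update] at this
            exact this

/-- The prefix `x_{1:n+1}` of a trajectory `x_{1:T}`, for `n : Fin T`. -/
def dpfPrefix {X : Type*} {T : ℕ} (x : Fin T → X) (n : Fin T) :
    Fin (n.1 + 1) → X :=
  fun i => x ⟨i.1, by have h1 := i.2; have h2 := n.2; omega⟩

/-- The extended target density of discrete PMCMC admits the posterior as a
marginal: with `p` the posterior density on `Θ × 𝒳^T`, `R θ n s` the
conditional law of the `n`-th random support set given the weights (which are
deterministic functions of the earlier support sets, so `R θ n` depends only on
the supports at times `< n`), and the marginal inclusion probability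
`∑_{t ∋ x_{1:n}} R θ n s t` strictly positive on the support of `p`, summing
the extended target
`π^N(θ, x, s₁,…,s_T) = p(θ,x) ∏_{n≥2} 𝟙[x_{1:n} ∈ s_n] / r_n^N(x_{1:n} ∈ s_n | w_{n-1}) ⬝ ψ^N_θ(s₁,…,s_T)`
over all support sequences yields `p(θ, x)`. -/
theorem extended_target_marginal
    (X : Type*) [Fintype X] [DecidableEq X] (T : ℕ) (Θ : Type*)
    (p : Θ → (Fin T → X) → ℝ)
    (R : Θ → (n : Fin T) → ((m : Fin T) → Finset (Fin (m.1 + 1) → X)) →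
      Finset (Fin (n.1 + 1) → X) → ℝ)
    (hRdep : ∀ θ (n : Fin T) s s', (∀ m : Fin T, m < n → s m = s' m) →
      R θ n s = R θ n s')
    (hRnonneg : ∀ θ n s t, 0 ≤ R θ n s t)
    (hRprob : ∀ θ (n : Fin T) s,
      ∑ t : Finset (Fin (n.1 + 1) → X), R θ n s t = 1)
    (hpos : ∀ θ (x : Fin T → X), p θ x ≠ 0 → ∀ (n : Fin T) s,
      0 < ∑ t ∈ Finset.univ.filter
            (fun t : Finset (Fin (n.1 + 1) → X) => dpfPrefix x n ∈ t),
          R θ n s t) :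
    ∀ θ (x : Fin T → X),
      (∑ s : (m : Fin T) → Finset (Fin (m.1 + 1) → X),
        p θ x *
        (∏ n ∈ Finset.univ.filter fun n : Fin T => 1 ≤ n.1,
          (if dpfPrefix x n ∈ s n then (1 : ℝ) else 0) /
            ∑ t ∈ Finset.univ.filter
                (fun t : Finset (Fin (n.1 + 1) → X) => dpfPrefix x n ∈ t),
              R θ n s t) *
        ∏ n : Fin T, R θ n s (s n))
      = p θ x := by
  intro θ x
  by_cases hp : p θ x = 0
  · simp [hp]
  -- the per-step factor
  set F : (n : Fin T) → ((m : Fin T) → Finset (Fin (m.1 + 1) → X)) → ℝ :=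
    fun n s =>
      (if 1 ≤ n.1 then
        (if dpfPrefix x n ∈ s n then (1 : ℝ) else 0) /
          ∑ t ∈ Finset.univ.filter
              (fun t : Finset (Fin (n.1 + 1) → X) => dpfPrefix x n ∈ t),
            R θ n s t
      else 1) * R θ n s (s n) with hF
  have hrw : ∀ s : (m : Fin T) → Finset (Fin (m.1 + 1) → X),
      p θ x *
        (∏ n ∈ Finset.univ.filter fun n : Fin T => 1 ≤ n.1,
          (if dpfPrefix x n ∈ s n then (1 : ℝ) else 0) /
            ∑ t ∈ Finset.univ.filter
                (fun t : Finset (Fin (n.1 + 1) → X) => dpfPrefix x n ∈ t),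
              R θ n s t) *
        ∏ n : Fin T, R θ n s (s n)
      = p θ x * ∏ n : Fin T, F n s := by
    intro s
    rw [mul_assoc]
    congr 1
    rw [Finset.prod_filter, ← Finset.prod_mul_distrib]
  simp_rw [hrw]
  rw [← Finset.mul_sum]
  have htel : ∑ s : (m : Fin T) → Finset (Fin (m.1 + 1) → X),
      ∏ n : Fin T, F n s = 1 := by
    refine dpf_telescope T _ F ?_ ?_
    · intro n s s' h
      have hR : R θ n s = R θ n s' := hRdep θ n s s' fun m hm => h m hm.le
      simp only [hF, hR, h n le_rfl]
    · intro n s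
      have hR : ∀ t, R θ n (Function.update s n t) = R θ n s := by
        intro t
        refine hRdep θ n _ _ fun m hm => ?_
        exact Function.update_of_ne (ne_of_lt hm) _ _
      by_cases hn : 1 ≤ n.1
      · simp only [hF, hn, if_true, hR, Function.update_self]
        simp_rw [div_mul_eq_mul_div, ← Finset.sum_div]
        rw [div_eq_one_iff_eq (hpos θ x hp n s).ne']
        rw [Finset.sum_filter]
        exact Finset.sum_congr rfl fun t _ => by split <;> simp
      · simp only [hF, hn, if_false, one_mul, hR, Function.update_self]
        exact hRprob θ n s
  rw [htel, mul_one]
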